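/- Let M(n) be the ZZ sign matrix for n ≥ 4, decomposed in block form M(n) = [[L, −L],[M(n−1), M(n−1)]] where L records the signs of couplings involving qubit n. Then for any problem b = (β, c) with β ∈ ℝ^{n−1} and c ∈ ℝ^{(n−1)(n−2)/2}, the minimal ‖t‖₁ with M(n)t = b, t ≥ 0, is at most the minimal ‖t'‖₁ with M(n−1)t' = c, t' ≥ 0, plus ‖β‖₁. -/

import Mathlib

section Aux

/-- Flip-involution lemma: the sum of products of signs over all sign assignments
(with the first sign fixed to `true`) vanishes for two distinct coordinates,
assuming the flipped coordinate is not the fixed one. -/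
private lemma sum_eps_mul_aux (n : ℕ) (hn : 0 < n) (j k : Fin n) (hjk : j ≠ k)
    (hk : k ≠ ⟨0, hn⟩) :
    ∑ s : {s : Fin n → Bool // s ⟨0, hn⟩ = true},
      (if s.1 j then (1 : ℝ) else -1) * (if s.1 k then (1 : ℝ) else -1) = 0 := by
  classical
  apply Finset.sum_involution
    (g := fun s _ => (⟨Function.update s.1 k (!s.1 k), by
      rw [Function.update_of_ne (Ne.symm hk)]; exact s.2⟩ :
      {s : Fin n → Bool // s ⟨0, hn⟩ = true}))
  · intro s _
    have hj : Function.update s.1 k (!s.1 k) j = s.1 j :=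
      Function.update_of_ne hjk _ _
    have hk' : Function.update s.1 k (!s.1 k) k = !s.1 k :=
      Function.update_self _ _ _
    cases h1 : s.1 j <;> cases h2 : s.1 k <;>
      simp [Function.update_of_ne hjk, hk', h1, h2]
  · intro s _ _ h
    have := congrFun (congrArg Subtype.val h) k
    simp only [Function.update_self] at this
    cases h2 : s.1 k <;> rw [h2] at this <;> simp at this
  · intro s _
    apply Subtype.ext
    funext x
    by_cases hx : x = k
    · subst hx
      simp [Function.update_self, Bool.not_not]
    · simp [Function.update_of_ne hx]
  · intro s _; exact Finset.mem_univ _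

private lemma sum_eps_mul (n : ℕ) (hn : 0 < n) (j k : Fin n) (hjk : j ≠ k) :
    ∑ s : {s : Fin n → Bool // s ⟨0, hn⟩ = true},
      (if s.1 j then (1 : ℝ) else -1) * (if s.1 k then (1 : ℝ) else -1) = 0 := by
  by_cases hk : k = ⟨0, hn⟩
  · have hj : j ≠ ⟨0, hn⟩ := by rw [hk] at hjk; exact hjk
    have := sum_eps_mul_aux n hn k j (Ne.symm hjk) hj
    rw [← this]
    exact Finset.sum_congr rfl fun s _ => mul_comm _ _
  · exact sum_eps_mul_aux n hn j k hjk hk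

/-- The snoc equivalence between sign assignments on `n+1` qubits (first fixed true)
and pairs of an assignment on `n` qubits and a sign for the last qubit. -/
private def snocEquiv (n : ℕ) (hn : 0 < n) :
    ({s : Fin n → Bool // s ⟨0, hn⟩ = true} × Bool) ≃
      {s : Fin (n + 1) → Bool // s ⟨0, Nat.succ_pos n⟩ = true} where
  toFun x := ⟨Fin.snoc x.1.1 x.2, by
    rw [show (⟨0, Nat.succ_pos n⟩ : Fin (n + 1)) = Fin.castSucc ⟨0, hn⟩ from rfl,
      Fin.snoc_castSucc]
    exact x.1.2⟩
  invFun s := (⟨fun j => s.1 j.castSucc, s.2⟩, s.1 (Fin.last n))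
  left_inv x := by
    ext1
    · apply Subtype.ext
      funext j
      simp
    · simp
  right_inv s := by
    apply Subtype.ext
    funext j
    induction j using Fin.lastCases with
    | last => simp
    | cast j => simp

end Aux

/-- Recursive block structure of the ZZ sign matrix: for n+1 ≥ 4 qubits, a problem
b = (β, c) (with β the couplings of the last qubit and c the couplings of the first n
qubits) can be solved with total time at most that of any solution t' of the n-qubit
problem M(n) t' = c plus ‖β‖₁.  Hence the minimal ‖t‖₁ for M(n+1) t = b is at most the
minimal ‖t'‖₁ for M(n) t' = c plus ‖β‖₁. -/
theorem stmt_13 (n : ℕ) (hn : 3 ≤ n)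
    (b : {p : Fin (n + 1) × Fin (n + 1) // p.1 < p.2} → ℝ)
    (t' : {s : Fin n → Bool // s ⟨0, by omega⟩ = true} → ℝ)
    (ht' : ∀ s, 0 ≤ t' s)
    (hc : ∀ p : {p : Fin n × Fin n // p.1 < p.2},
      ∑ s : {s : Fin n → Bool // s ⟨0, by omega⟩ = true},
        t' s * ((if s.1 p.1.1 then (1 : ℝ) else -1) *
                (if s.1 p.1.2 then (1 : ℝ) else -1))
        = b ⟨(p.1.1.castSucc, p.1.2.castSucc), Fin.castSucc_lt_castSucc_iff.mpr p.2⟩) :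
    ∃ t : {s : Fin (n + 1) → Bool // s ⟨0, by omega⟩ = true} → ℝ,
      (∀ s, 0 ≤ t s) ∧
      (∀ p : {p : Fin (n + 1) × Fin (n + 1) // p.1 < p.2},
        ∑ s : {s : Fin (n + 1) → Bool // s ⟨0, by omega⟩ = true},
          t s * ((if s.1 p.1.1 then (1 : ℝ) else -1) *
                 (if s.1 p.1.2 then (1 : ℝ) else -1)) = b p) ∧
      (∑ s, t s) ≤ (∑ s, t' s) +
        ∑ i : Fin n, |b ⟨(i.castSucc, Fin.last n), Fin.castSucc_lt_last i⟩| := by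
  classical
  have hn0 : 0 < n := by omega
  -- abbreviations
  let β : Fin n → ℝ := fun i => b ⟨(i.castSucc, Fin.last n), Fin.castSucc_lt_last i⟩
  let N : ℝ := (Fintype.card {s : Fin n → Bool // s ⟨0, hn0⟩ = true} : ℝ)
  have hNpos : 0 < N := by
    have h1 : 0 < Fintype.card {s : Fin n → Bool // s ⟨0, hn0⟩ = true} :=
      Fintype.card_pos_iff.mpr ⟨⟨fun _ => true, rfl⟩⟩
    show (0 : ℝ) < (Fintype.card {s : Fin n → Bool // s ⟨0, hn0⟩ = true} : ℝ)
    exact_mod_cast h1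
  let w : {s : Fin n → Bool // s ⟨0, hn0⟩ = true} → Bool → ℝ := fun s' d =>
    ∑ i : Fin n, (|β i| / N) * (if (s'.1 i == d) = decide (0 ≤ β i) then 1 else 0)
  have hwnn : ∀ s' d, 0 ≤ w s' d := by
    intro s' d
    apply Finset.sum_nonneg
    intro i _
    apply mul_nonneg (div_nonneg (abs_nonneg _) hNpos.le)
    split <;> norm_num
  let E := snocEquiv n hn0
  -- the solution
  let t : {s : Fin (n + 1) → Bool // s ⟨0, Nat.succ_pos n⟩ = true} → ℝ :=
    fun s => t' (E.symm s).1 / 2 + w (E.symm s).1 (E.symm s).2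
  have hsum : ∀ f : {s : Fin (n + 1) → Bool // s ⟨0, Nat.succ_pos n⟩ = true} → ℝ,
      ∑ s, f s =
        ∑ x : {s : Fin n → Bool // s ⟨0, hn0⟩ = true} × Bool, f (E x) :=
    fun f => (Fintype.sum_equiv E _ _ fun x => rfl).symm
  have htE : ∀ x, t (E x) = t' x.1 / 2 + w x.1 x.2 := by
    intro x
    show t' (E.symm (E x)).1 / 2 + w (E.symm (E x)).1 (E.symm (E x)).2 = _
    rw [Equiv.symm_apply_apply]
  have hE1 : ∀ (x : {s : Fin n → Bool // s ⟨0, hn0⟩ = true} × Bool) (j : Fin n),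
      (E x).1 j.castSucc = x.1.1 j := by
    intro x j
    show Fin.snoc (α := fun _ => Bool) x.1.1 x.2 j.castSucc = x.1.1 j
    exact Fin.snoc_castSucc _ _ _
  have hE2 : ∀ x : {s : Fin n → Bool // s ⟨0, hn0⟩ = true} × Bool,
      (E x).1 (Fin.last n) = x.2 := by
    intro x
    show Fin.snoc (α := fun _ => Bool) x.1.1 x.2 (Fin.last n) = x.2
    exact Fin.snoc_last _ _
  -- sum of w over the two Boolean values is a constant
  have hwsum : ∀ s', w s' true + w s' false = ∑ i : Fin n, |β i| / N := by
    intro s'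
    show (∑ i : Fin n, _) + (∑ i : Fin n, _) = _
    rw [← Finset.sum_add_distrib]
    apply Finset.sum_congr rfl
    intro i _
    cases hb : s'.1 i <;> cases hs : decide (0 ≤ β i) <;> simp [hb, hs]
  -- difference of w over the two Boolean values
  have hwdiff : ∀ s', w s' true - w s' false =
      ∑ i : Fin n, (|β i| / N) * ((if 0 ≤ β i then (1 : ℝ) else -1) *
        (if s'.1 i then (1 : ℝ) else -1)) := by
    intro s'
    show (∑ i : Fin n, _) - (∑ i : Fin n, _) = _
    rw [← Finset.sum_sub_distrib]
    apply Finset.sum_congr rfl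
    intro i _
    rw [← mul_sub]
    congr 1
    rcases le_or_gt 0 (β i) with h | h
    · cases hb : s'.1 i <;> simp [hb, h]
    · cases hb : s'.1 i <;> simp [hb, h.not_ge]
  -- the square of a sign is 1
  have hsq : ∀ (s' : {s : Fin n → Bool // s ⟨0, hn0⟩ = true}) (i : Fin n),
      (if s'.1 i then (1 : ℝ) else -1) * (if s'.1 i then (1 : ℝ) else -1) = 1 := by
    intro s' i
    cases h : s'.1 i <;> simp [h]
  refine ⟨t, ?_, ?_, ?_⟩
  · intro s
    have h1 := ht' (E.symm s).1
    have h2 := hwnn (E.symm s).1 (E.symm s).2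
    show 0 ≤ t' (E.symm s).1 / 2 + w (E.symm s).1 (E.symm s).2
    linarith
  · rintro ⟨⟨a, a2⟩, hlt⟩
    have ha : a ≠ Fin.last n := by
      intro h
      rw [h] at hlt
      exact absurd hlt (not_lt.mpr (Fin.le_last a2))
    obtain ⟨j, rfl⟩ := Fin.exists_castSucc_eq.mpr ha
    rcases Fin.eq_castSucc_or_eq_last a2 with ⟨k, rfl⟩ | rfl
    · -- pair among the first n qubits
      have hjk : j < k := Fin.castSucc_lt_castSucc_iff.mp hlt
      rw [hsum, Fintype.sum_prod_type]
      have key : ∀ s', ∑ d : Bool, t (E (s', d)) *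
          ((if (E (s', d)).1 j.castSucc then (1 : ℝ) else -1) *
           (if (E (s', d)).1 k.castSucc then (1 : ℝ) else -1)) =
          (t' s' + ∑ i : Fin n, |β i| / N) *
          ((if s'.1 j then (1 : ℝ) else -1) * (if s'.1 k then (1 : ℝ) else -1)) := by
        intro s'
        rw [Fintype.sum_bool]
        simp only [htE, hE1]
        rw [← hwsum s']
        ring
      rw [Finset.sum_congr rfl fun s' _ => key s']
      have expand : ∑ s' : {s : Fin n → Bool // s ⟨0, hn0⟩ = true},
          (t' s' + ∑ i : Fin n, |β i| / N) *
          ((if s'.1 j then (1 : ℝ) else -1) * (if s'.1 k then (1 : ℝ) else -1)) =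
          (∑ s' : {s : Fin n → Bool // s ⟨0, hn0⟩ = true}, t' s' *
            ((if s'.1 j then (1 : ℝ) else -1) * (if s'.1 k then (1 : ℝ) else -1))) +
          (∑ i : Fin n, |β i| / N) *
          ∑ s' : {s : Fin n → Bool // s ⟨0, hn0⟩ = true},
            (if s'.1 j then (1 : ℝ) else -1) * (if s'.1 k then (1 : ℝ) else -1) := by
        rw [Finset.mul_sum, ← Finset.sum_add_distrib]
        apply Finset.sum_congr rfl
        intro s' _
        ring
      rw [expand, sum_eps_mul n hn0 j k (ne_of_lt hjk), mul_zero, add_zero]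
      exact hc ⟨(j, k), hjk⟩
    · -- pair (j, last)
      have hb : b ⟨(j.castSucc, Fin.last n), hlt⟩ = β j := rfl
      rw [hb, hsum, Fintype.sum_prod_type]
      have key : ∀ s', ∑ d : Bool, t (E (s', d)) *
          ((if (E (s', d)).1 j.castSucc then (1 : ℝ) else -1) *
           (if (E (s', d)).1 (Fin.last n) then (1 : ℝ) else -1)) =
          ∑ i : Fin n, (|β i| / N) * ((if 0 ≤ β i then (1 : ℝ) else -1) *
            ((if s'.1 i then (1 : ℝ) else -1) * (if s'.1 j then (1 : ℝ) else -1))) := by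
        intro s'
        rw [Fintype.sum_bool]
        simp only [htE, hE1, hE2]
        simp only [eq_self_iff_true, if_true, Bool.false_eq_true, if_false]
        have h2 : (∑ i : Fin n, (|β i| / N) * ((if 0 ≤ β i then (1 : ℝ) else -1) *
              (if s'.1 i then (1 : ℝ) else -1))) * (if s'.1 j then (1 : ℝ) else -1) =
            ∑ i : Fin n, (|β i| / N) * ((if 0 ≤ β i then (1 : ℝ) else -1) *
              ((if s'.1 i then (1 : ℝ) else -1) * (if s'.1 j then (1 : ℝ) else -1))) := by
          rw [Finset.sum_mul]
          exact Finset.sum_congr rfl fun i _ => by ring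
        linear_combination (if s'.1 j then (1 : ℝ) else -1) * hwdiff s' + h2
      rw [Finset.sum_congr rfl fun s' _ => key s']
      rw [Finset.sum_comm]
      have single : ∀ i : Fin n, i ≠ j →
          ∑ s' : {s : Fin n → Bool // s ⟨0, hn0⟩ = true},
            (|β i| / N) * ((if 0 ≤ β i then (1 : ℝ) else -1) *
              ((if s'.1 i then (1 : ℝ) else -1) * (if s'.1 j then (1 : ℝ) else -1))) = 0 := by
        intro i hij
        rw [← Finset.mul_sum]
        rw [show (∑ s' : {s : Fin n → Bool // s ⟨0, hn0⟩ = true},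
            (if 0 ≤ β i then (1 : ℝ) else -1) *
              ((if s'.1 i then (1 : ℝ) else -1) * (if s'.1 j then (1 : ℝ) else -1))) =
            (if 0 ≤ β i then (1 : ℝ) else -1) *
            ∑ s' : {s : Fin n → Bool // s ⟨0, hn0⟩ = true},
              (if s'.1 i then (1 : ℝ) else -1) * (if s'.1 j then (1 : ℝ) else -1)
          from (Finset.mul_sum _ _ _).symm]
        rw [sum_eps_mul n hn0 i j hij, mul_zero, mul_zero]
      rw [Finset.sum_eq_single j (fun i _ hij => single i hij)
        (fun h => absurd (Finset.mem_univ j) h)]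
      have : ∀ s' : {s : Fin n → Bool // s ⟨0, hn0⟩ = true},
          (|β j| / N) * ((if 0 ≤ β j then (1 : ℝ) else -1) *
            ((if s'.1 j then (1 : ℝ) else -1) * (if s'.1 j then (1 : ℝ) else -1))) =
          (|β j| / N) * (if 0 ≤ β j then (1 : ℝ) else -1) := by
        intro s'
        rw [hsq s' j, mul_one]
      rw [Finset.sum_congr rfl fun s' _ => this s', Finset.sum_const, Finset.card_univ,
        nsmul_eq_mul]
      rcases le_or_gt 0 (β j) with h | h
      · rw [if_pos h, mul_one, abs_of_nonneg h]
        field_simp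
        exact mul_comm _ _
      · rw [if_neg (not_le.mpr h), abs_of_neg h]
        field_simp
        exact mul_comm _ _
  · rw [hsum, Fintype.sum_prod_type]
    have key : ∀ s', ∑ d : Bool, t (E (s', d)) = t' s' + ∑ i : Fin n, |β i| / N := by
      intro s'
      rw [Fintype.sum_bool]
      simp only [htE]
      rw [← hwsum s']
      ring
    rw [Finset.sum_congr rfl fun s' _ => key s', Finset.sum_add_distrib,
      Finset.sum_const, Finset.card_univ, nsmul_eq_mul]
    have : (Fintype.card {s : Fin n → Bool // s ⟨0, hn0⟩ = true} : ℝ) *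
        (∑ i : Fin n, |β i| / N) = ∑ i : Fin n, |β i| := by
      rw [Finset.mul_sum]
      apply Finset.sum_congr rfl
      intro i _
      field_simp
      exact mul_comm _ _
    rw [this]
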